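/- Let (Γₙ, α_n, ∇ₙ) be the GKM graph of the complex Grassmannian G₂(ℂ^{n+2}) (Johnson graph J(n+2,2) with the standard axial function into ℤ^{n+1} and its unique connection), n ≥ 1. Then the group of axial functions 𝒜(Γₙ, α_n, ∇ₙ) is isomorphic to ℤ^{n+1}. -/

import Mathlib

/-- The combinatorial core of an `m`-valent graph: oriented edges with reversal,
orderings of the `m` outgoing edges at each vertex, and a connection. -/
structure GKMCore (V E : Type*) (m : ℕ) where
  src : E → V
  tgt : E → V
  rev : E → E
  rev_rev : ∀ e, rev (rev e) = e
  src_rev : ∀ e, src (rev e) = tgt e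
  no_loops : ∀ e, src e ≠ tgt e
  /-- the `j`-th outgoing edge at vertex `p` -/
  ord : V → Fin m → E
  ord_src : ∀ p j, src (ord p j) = p
  /-- the index of an edge among the outgoing edges at its source -/
  eidx : E → Fin m
  ord_eidx : ∀ e, ord (src e) (eidx e) = e
  eidx_ord : ∀ p j, eidx (ord p j) = j
  /-- the connection: `conn e` maps outgoing edges at `src e` to outgoing edges at `tgt e` -/
  conn : E → E → E
  conn_src : ∀ e e', src e' = src e → src (conn e e') = tgt e
  conn_self : ∀ e, conn e e = rev e
  conn_conn : ∀ e e', src e' = src e → conn (rev e) (conn e e') = e'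

namespace GKMCore

variable {V E : Type*} {m : ℕ}

/-- The permutation of `Fin m` induced by the connection along `e`:
`σ_e` is characterized by `∇_e (e_{σ(j), src e}) = e_{j, tgt e}`. -/
def sigma (C : GKMCore V E m) (e : E) (j : Fin m) : Fin m :=
  C.eidx (C.conn (C.rev e) (C.ord (C.tgt e) j))

/-- Adjacency of vertices through an oriented edge. -/
def Adj (C : GKMCore V E m) (p q : V) : Prop := ∃ e, C.src e = p ∧ C.tgt e = q

/-- Connectedness of the graph. -/
def Connected (C : GKMCore V E m) : Prop := ∀ p q, Relation.ReflTransGen C.Adj p q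

end GKMCore

/-- An axial function with values in `ℤⁿ ≅ H²(BTⁿ)` on the core `C`, compatible
with the connection `C.conn` via (given) congruence coefficients: this is the
data of a GKM graph of type `(m, n)` (effectiveness stated separately). -/
structure AxialOn {V E : Type*} {m : ℕ} (C : GKMCore V E m) (n : ℕ) where
  α : E → Fin n → ℤ
  α_rev : ∀ e, α (C.rev e) = - α e
  α_ne : ∀ e, α e ≠ 0
  pairwise_indep : ∀ e e', C.src e = C.src e' → e ≠ e' → LinearIndependent ℤ ![α e, α e']
  /-- the congruence coefficients `c_e(e')` -/
  coeff : E → E → ℤ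
  congruence : ∀ e e', C.src e' = C.src e → α (C.conn e e') = α e' + coeff e e' • α e

namespace AxialOn

variable {V E : Type*} {m n : ℕ} {C : GKMCore V E m}

/-- Effectiveness: at every vertex the values of the axial function span `ℤⁿ`. -/
def Effective (A : AxialOn C n) : Prop :=
  ∀ p, Submodule.span ℤ (Set.range fun j => A.α (C.ord p j)) = ⊤

/-- The invariant function `c : E(Γ) → ℤ^m`, the vector of congruence
coefficients of `e` on the (ordered) outgoing edges at `src e`. -/
def cvec (A : AxialOn C n) (e : E) : Fin m → ℤ := fun j => A.coeff e (C.ord (C.src e) j)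

/-- `A'` is an extension of `A` (same graph, same connection) via a surjective
linear projection `π` with `π ∘ α' = α`. -/
def Extends {l : ℕ} (A' : AxialOn C l) (A : AxialOn C n) : Prop :=
  ∃ π : (Fin l → ℤ) →ₗ[ℤ] (Fin n → ℤ), Function.Surjective π ∧ ∀ e, π (A'.α e) = A.α e

/-- The defining relation of the group of axial functions:
`N_e (f (src e)) - f (tgt e) = f (tgt e)_{ē} • c(ē)` for every edge `e`. -/
def IsAxialClass (A : AxialOn C n) (f : V → Fin m → ℤ) : Prop :=
  ∀ e j, f (C.src e) (C.sigma e j) - f (C.tgt e) j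
      = f (C.tgt e) (C.eidx (C.rev e)) * A.cvec (C.rev e) j

/-- The group of axial functions `𝒜(Γ, α, ∇)` as a `ℤ`-submodule of
`⊕_{p ∈ V(Γ)} ℤ^m`. -/
def axialModule (A : AxialOn C n) : Submodule ℤ (V → Fin m → ℤ) where
  carrier := {f | A.IsAxialClass f}
  zero_mem' := by intro e j; simp [IsAxialClass, cvec]
  add_mem' := by
    intro f g hf hg e j
    have h1 := hf e j
    have h2 := hg e j
    simp only [Pi.add_apply]
    linear_combination h1 + h2
  smul_mem' := by
    intro a f hf e j
    have h1 := hf e j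
    simp only [Pi.smul_apply, smul_eq_mul]
    linear_combination a * h1

end AxialOn

/-! The Johnson graph `J(n+2, 2)`, the GKM graph of the complex Grassmannian
`G₂(ℂ^{n+2})` with the standard effective `T^{n+1}`-action. -/

/-- Vertices: 2-element subsets of `[n+2]`. -/
def JV (n : ℕ) : Type := {s : Finset (Fin (n + 2)) // s.card = 2}

/-- Oriented edges: ordered pairs of distinct intersecting 2-subsets. -/
def JE (n : ℕ) : Type :=
  {x : JV n × JV n // x.1 ≠ x.2 ∧ (x.1.1 ∩ x.2.1).Nonempty}

/-- The vertex `{i, j}`. -/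
def mkV {n : ℕ} (i j : Fin (n + 2)) (h : i ≠ j) : JV n :=
  ⟨{i, j}, Finset.card_pair h⟩

/-- The oriented edge `E_{i,j}^{i,k}` from `{i, j}` to `{i, k}`. -/
def mkE {n : ℕ} (i j k : Fin (n + 2)) (hij : i ≠ j) (hik : i ≠ k) (hjk : j ≠ k) :
    JE n :=
  ⟨(mkV i j hij, mkV i k hik), by
    constructor
    · intro h
      have h2 : ({i, j} : Finset (Fin (n + 2))) = {i, k} :=
        congrArg Subtype.val h
      have hj : j ∈ ({i, k} : Finset (Fin (n + 2))) := by
        rw [← h2]; simp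
      simp only [Finset.mem_insert, Finset.mem_singleton] at hj
      rcases hj with h1 | h1
      · exact hij h1.symm
      · exact hjk h1
    · exact ⟨i, by simp [mkV]⟩⟩

/-- The vectors `a₁, …, a_{n+1}, a_{n+2}` in `ℤ^{n+1}`: `a₁, …, a_{n+1}` a
basis `B` and `a_{n+2} = 0`. -/
noncomputable def avec {n : ℕ} (B : Module.Basis (Fin (n + 1)) ℤ (Fin (n + 1) → ℤ))
    (k : Fin (n + 2)) : Fin (n + 1) → ℤ :=
  if h : (k : ℕ) < n + 1 then B ⟨k, h⟩ else 0

/-- for the GKM graph of the complex Grassmannian `G₂(ℂ^{n+2})`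
(the Johnson graph `J(n+2,2)` with axial function
`α_n(E_{i,j}^{i,k}) = −a_j + a_k` and its unique connection), the group of
axial functions is isomorphic to `ℤ^{n+1}`. -/
theorem grassmannian_axialModule_iso
    (n : ℕ) (hn : 1 ≤ n) (B : Module.Basis (Fin (n + 1)) ℤ (Fin (n + 1) → ℤ))
    (C : GKMCore (JV n) (JE n) (2 * n))
    (hsrc : ∀ e, C.src e = e.1.1) (htgt : ∀ e, C.tgt e = e.1.2)
    (hrev : ∀ e, (C.rev e).1 = (e.1.2, e.1.1))
    (A : AxialOn C (n + 1))
    (hα : ∀ (i j k : Fin (n + 2)) (hij : i ≠ j) (hik : i ≠ k) (hjk : j ≠ k),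
      A.α (mkE i j k hij hik hjk) = avec B k - avec B j)
    (hconn₁ : ∀ (i j k l : Fin (n + 2)) (hij : i ≠ j) (hik : i ≠ k) (hjk : j ≠ k)
      (hil : i ≠ l) (hjl : j ≠ l) (hkl : k ≠ l),
      C.conn (mkE i j k hij hik hjk) (mkE i j l hij hil hjl)
        = mkE i k l hik hil hkl)
    (hconn₂ : ∀ (i j k l : Fin (n + 2)) (hij : i ≠ j) (hik : i ≠ k) (hjk : j ≠ k)
      (hil : i ≠ l) (hjl : j ≠ l) (hkl : k ≠ l),
      C.conn (mkE i j k hij hik hjk) (mkE j i l (Ne.symm hij) hjl hil)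
        = mkE k i l (Ne.symm hik) hkl hil)
    (hconn₃ : ∀ (i j k : Fin (n + 2)) (hij : i ≠ j) (hik : i ≠ k) (hjk : j ≠ k),
      C.conn (mkE i j k hij hik hjk) (mkE j i k (Ne.symm hij) hjk hik)
        = mkE k i j (Ne.symm hik) (Ne.symm hjk) hij) :
    Nonempty (A.axialModule ≃ₗ[ℤ] (Fin (n + 1) → ℤ)) := by
  classical
  -- generic facts about the core
  have trev : ∀ e : JE n, C.tgt (C.rev e) = C.src e := by
    intro e
    have h := (C.src_rev (C.rev e)).symm
    rwa [C.rev_rev] at h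
  have ordE : ∀ (e e' : JE n), C.src e' = C.src e → C.ord (C.src e) (C.eidx e') = e' := by
    intro e e' h
    rw [← h]
    exact C.ord_eidx e'
  have hrevE : ∀ (i j k : Fin (n+2)) (hij : i ≠ j) (hik : i ≠ k) (hjk : j ≠ k),
      C.rev (mkE i j k hij hik hjk) = mkE i k j hik hij (Ne.symm hjk) := by
    intro i j k hij hik hjk
    apply Subtype.ext
    rw [hrev]
    rfl
  have mem_two : ∀ (s : Finset (Fin (n+2))) (i : Fin (n+2)), s.card = 2 → i ∈ s →
      ∃ j, i ≠ j ∧ s = {i, j} := by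
    intro s i h hi
    obtain ⟨a, b, hab, rfl⟩ := Finset.card_eq_two.mp h
    rcases Finset.mem_insert.mp hi with rfl | hb
    · exact ⟨b, hab, rfl⟩
    · rw [Finset.mem_singleton] at hb
      subst hb
      exact ⟨a, hab.symm, Finset.pair_comm a i⟩
  have exists_mk : ∀ e : JE n, ∃ (i j k : Fin (n+2)) (hij : i ≠ j) (hik : i ≠ k)
      (hjk : j ≠ k), e = mkE i j k hij hik hjk := by
    intro e
    obtain ⟨i, hi⟩ := e.2.2
    rw [Finset.mem_inter] at hi
    obtain ⟨j, hij, hp⟩ := mem_two _ i e.1.1.2 hi.1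
    obtain ⟨k, hik, hq⟩ := mem_two _ i e.1.2.2 hi.2
    have hjk : j ≠ k := by
      intro h
      subst h
      exact e.2.1 (Subtype.ext (hp.trans hq.symm))
    refine ⟨i, j, k, hij, hik, hjk, ?_⟩
    apply Subtype.ext
    have h1 : e.1.1 = mkV i j hij := Subtype.ext hp
    have h2 : e.1.2 = mkV i k hik := Subtype.ext hq
    exact Prod.ext h1 h2
  have pair_eq : ∀ (a b c d : Fin (n+2)), a ≠ b → ({a, b} : Finset (Fin (n+2))) = {c, d} →
      (a = c ∧ b = d) ∨ (a = d ∧ b = c) := by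
    intro a b c d hab h
    have ha : a = c ∨ a = d := by
      have h2 : a ∈ ({c, d} : Finset (Fin (n+2))) := h ▸ (by simp)
      simpa using h2
    have hb : b = c ∨ b = d := by
      have h2 : b ∈ ({c, d} : Finset (Fin (n+2))) := h ▸ (by simp)
      simpa using h2
    rcases ha with rfl | rfl
    · rcases hb with rfl | rfl
      · exact absurd rfl hab
      · exact Or.inl ⟨rfl, rfl⟩
    · rcases hb with rfl | rfl
      · exact Or.inr ⟨rfl, rfl⟩
      · exact absurd rfl hab
  -- coefficient computations
  have smul_cancel : ∀ (v : Fin (n+1) → ℤ), v ≠ 0 → ∀ a b : ℤ, a • v = b • v → a = b := by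
    intro v hv a b h
    obtain ⟨x, hx⟩ := Function.ne_iff.mp hv
    have h2 := congrFun h x
    simp only [Pi.smul_apply, smul_eq_mul] at h2
    exact mul_right_cancel₀ hx h2
  have coeff_eq : ∀ (e e' : JE n), C.src e' = C.src e → ∀ c : ℤ,
      A.α (C.conn e e') = A.α e' + c • A.α e → A.coeff e e' = c := by
    intro e e' h c hc
    have h2 := A.congruence e e' h
    have h3 : A.coeff e e' • A.α e = c • A.α e := add_left_cancel (h2.symm.trans hc)
    exact smul_cancel _ (A.α_ne e) _ _ h3
  have hcself : ∀ e : JE n, A.coeff e e = -2 := by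
    intro e
    refine coeff_eq e e rfl (-2) ?_
    rw [C.conn_self, A.α_rev]
    module
  have hc1 : ∀ (i j k l : Fin (n+2)) (hij : i ≠ j) (hik : i ≠ k) (hjk : j ≠ k)
      (hil : i ≠ l) (hjl : j ≠ l) (hkl : k ≠ l),
      A.coeff (mkE i j k hij hik hjk) (mkE i j l hij hil hjl) = -1 := by
    intro i j k l hij hik hjk hil hjl hkl
    refine coeff_eq _ _ ?_ _ ?_
    · rw [hsrc, hsrc]
      rfl
    · rw [hconn₁ i j k l hij hik hjk hil hjl hkl, hα, hα, hα]
      module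
  have hc2 : ∀ (i j k l : Fin (n+2)) (hij : i ≠ j) (hik : i ≠ k) (hjk : j ≠ k)
      (hil : i ≠ l) (hjl : j ≠ l) (hkl : k ≠ l),
      A.coeff (mkE i j k hij hik hjk) (mkE j i l (Ne.symm hij) hjl hil) = 0 := by
    intro i j k l hij hik hjk hil hjl hkl
    refine coeff_eq _ _ ?_ _ ?_
    · rw [hsrc, hsrc]
      exact Subtype.ext (Finset.pair_comm j i)
    · rw [hconn₂ i j k l hij hik hjk hil hjl hkl, hα, hα, hα]
      module
  have hc3 : ∀ (i j k : Fin (n+2)) (hij : i ≠ j) (hik : i ≠ k) (hjk : j ≠ k),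
      A.coeff (mkE i j k hij hik hjk) (mkE j i k (Ne.symm hij) hjk hik) = -1 := by
    intro i j k hij hik hjk
    refine coeff_eq _ _ ?_ _ ?_
    · rw [hsrc, hsrc]
      exact Subtype.ext (Finset.pair_comm j i)
    · rw [hconn₃ i j k hij hik hjk, hα, hα, hα]
      module
  -- translation of the axial-class condition into a condition on edges
  have Φrel : ∀ f : JV n → Fin (2*n) → ℤ,
      A.IsAxialClass f ↔ ∀ (e e' : JE n), C.src e' = C.src e →
        f (C.tgt e) (C.eidx (C.conn e e')) = f (C.src e) (C.eidx e')
          + f (C.src e) (C.eidx e) * A.coeff e e' := by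
    intro f
    constructor
    · intro h e e' hs
      have h1 := h (C.rev e) (C.eidx e')
      simp only [GKMCore.sigma, AxialOn.cvec, C.rev_rev, C.src_rev, trev] at h1
      rw [ordE e e' hs] at h1
      linarith [h1]
    · intro h e j
      have h1 := h (C.rev e) (C.ord (C.tgt e) j) (by rw [C.ord_src, C.src_rev])
      simp only [trev, C.src_rev, C.eidx_ord, C.rev_rev] at h1
      simp only [GKMCore.sigma, AxialOn.cvec, C.src_rev]
      linarith [h1]
  -- the distinguished edges used to define the isomorphism
  have h0last : (0 : Fin (n+2)) ≠ Fin.last (n+1) :=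
    Fin.ne_of_val_ne (by simp only [Fin.val_zero, Fin.val_last]; omega)
  have h1last : (1 : Fin (n+2)) ≠ Fin.last (n+1) :=
    Fin.ne_of_val_ne (by simp only [Fin.val_one, Fin.val_last]; omega)
  set K : Fin (n+1) → Fin (n+2) := fun t => if t.castSucc = 0 then 1 else 0 with hK
  have hK_ne_last : ∀ t, K t ≠ Fin.last (n+1) := by
    intro t
    rw [hK]
    dsimp only
    split
    · exact h1last
    · exact h0last
  have hK_ne_t : ∀ t : Fin (n+1), K t ≠ t.castSucc := by
    intro t
    rw [hK]
    dsimp only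
    split
    · rename_i h
      rw [h]
      exact Fin.ne_of_val_ne (by simp only [Fin.val_one, Fin.val_zero]; omega)
    · rename_i h
      exact fun h2 => h h2.symm
  have hlast_ne : ∀ t : Fin (n+1), Fin.last (n+1) ≠ t.castSucc :=
    fun t => (Fin.exists_castSucc_eq.mp ⟨t, rfl⟩).symm
  set Et : Fin (n+1) → JE n :=
    fun t => mkE (K t) (Fin.last (n+1)) t.castSucc (hK_ne_last t) (hK_ne_t t)
      (hlast_ne t) with hEt
  -- the linear map
  set θ : A.axialModule →ₗ[ℤ] (Fin (n+1) → ℤ) :=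
    { toFun := fun f => fun t => (f : JV n → Fin (2*n) → ℤ) (C.src (Et t)) (C.eidx (Et t))
      map_add' := fun x y => rfl
      map_smul' := fun a x => rfl } with hθ
  have hinj : Function.Injective θ := by
    rw [injective_iff_map_eq_zero]
    rintro ⟨f, hf⟩ hx
    set g : JE n → ℤ := fun e => f (C.src e) (C.eidx e) with hg
    have P : ∀ e e', C.src e' = C.src e → g (C.conn e e') = g e' + g e * A.coeff e e' := by
      intro e e' hs
      have h1 := (Φrel f).mp hf e e' hs
      rw [hg]
      dsimp only
      rw [C.conn_src e e' hs, hs]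
      exact h1
    have grev : ∀ e, g (C.rev e) = - g e := by
      intro e
      have h1 := P e e rfl
      rw [C.conn_self, hcself] at h1
      linarith
    have hzero : ∀ t : Fin (n+1), g (Et t) = 0 := by
      intro t
      exact congrFun hx t
    have hkeep : ∀ (a a' b c : Fin (n+2)) (hab : a ≠ b) (hac : a ≠ c) (hbc : b ≠ c)
        (hab' : a' ≠ b) (hac' : a' ≠ c) (haa' : a ≠ a'),
        g (mkE a b c hab hac hbc) = g (mkE a' b c hab' hac' hbc) := by
      intro a a' b c hab hac hbc hab' hac' haa'
      have hP := P (mkE b a a' hab.symm hab'.symm haa') (mkE a b c hab hac hbc)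
        (by rw [hsrc, hsrc]; exact Subtype.ext (Finset.pair_comm a b))
      rw [hconn₂ b a a' c hab.symm hab'.symm haa' hbc hac hac',
        hc2 b a a' c hab.symm hab'.symm haa' hbc hac hac'] at hP
      simpa using hP.symm
    have hcyc : ∀ (i j k : Fin (n+2)) (hij : i ≠ j) (hik : i ≠ k) (hjk : j ≠ k),
        g (mkE k i j (Ne.symm hik) (Ne.symm hjk) hij)
          = g (mkE j i k (Ne.symm hij) hjk hik) - g (mkE i j k hij hik hjk) := by
      intro i j k hij hik hjk
      have hP := P (mkE i j k hij hik hjk) (mkE j i k (Ne.symm hij) hjk hik)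
        (by rw [hsrc, hsrc]; exact Subtype.ext (Finset.pair_comm j i))
      rw [hconn₃ i j k hij hik hjk, hc3 i j k hij hik hjk] at hP
      linarith
    have hlastv : ∀ (a c : Fin (n+2)) (h1 : a ≠ Fin.last (n+1)) (h2 : a ≠ c)
        (h3 : Fin.last (n+1) ≠ c), g (mkE a (Fin.last (n+1)) c h1 h2 h3) = 0 := by
      intro a c h1 h2 h3
      obtain ⟨t, rfl⟩ := Fin.exists_castSucc_eq.mpr (Ne.symm h3)
      by_cases hak : a = K t
      · subst hak
        exact hzero t
      · rw [hkeep a (K t) _ _ h1 h2 h3 (hK_ne_last t) (hK_ne_t t) hak]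
        exact hzero t
    have grevlast : ∀ (a b : Fin (n+2)) (h1 : a ≠ b) (h2 : a ≠ Fin.last (n+1))
        (h3 : b ≠ Fin.last (n+1)), g (mkE a b (Fin.last (n+1)) h1 h2 h3) = 0 := by
      intro a b h1 h2 h3
      have h4 := grev (mkE a (Fin.last (n+1)) b h2 h1 (Ne.symm h3))
      rw [hrevE, hlastv a b h2 h1 (Ne.symm h3)] at h4
      simpa using h4
    have gall : ∀ (i j k : Fin (n+2)) (hij : i ≠ j) (hik : i ≠ k) (hjk : j ≠ k),
        g (mkE i j k hij hik hjk) = 0 := by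
      intro i j k hij hik hjk
      by_cases hjL : j = Fin.last (n+1)
      · subst hjL
        exact hlastv i k hij hik hjk
      by_cases hkL : k = Fin.last (n+1)
      · subst hkL
        exact grevlast i j hij hik hjk
      have h0 : g (mkE (Fin.last (n+1)) j k (fun h => hjL h.symm) (fun h => hkL h.symm) hjk)
          = 0 := by
        have h5 := hcyc j k (Fin.last (n+1)) hjk hjL hkL
        rw [grevlast, grevlast] at h5
        simpa using h5
      by_cases hiL : i = Fin.last (n+1)
      · subst hiL
        exact h0
      · rw [hkeep i (Fin.last (n+1)) j k hij hik hjk (fun h => hjL h.symm)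
          (fun h => hkL h.symm) hiL]
        exact h0
    apply Subtype.ext
    funext p t
    show f p t = 0
    have hfg : f p t = g (C.ord p t) := by
      rw [hg]
      dsimp only
      rw [C.ord_src, C.eidx_ord]
    rw [hfg]
    obtain ⟨a, b, c, h1, h2, h3, he⟩ := exists_mk (C.ord p t)
    rw [he]
    exact gall a b c h1 h2 h3
  have hsurj : Function.Surjective θ := by
    intro c
    set cc : Fin (n+2) → ℤ := fun k => if h : (k : ℕ) < n + 1 then c ⟨k, h⟩ else 0 with hcc
    set g : JE n → ℤ :=
      fun e => (∑ x ∈ e.1.2.1 \ e.1.1.1, cc x) - (∑ x ∈ e.1.1.1 \ e.1.2.1, cc x) with hgdef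
    have sdiff_lem : ∀ (i j k : Fin (n+2)), i ≠ j → i ≠ k → j ≠ k →
        ({i, k} : Finset (Fin (n+2))) \ {i, j} = {k} := by
      intro i j k hij hik hjk
      ext x
      simp only [Finset.mem_sdiff, Finset.mem_insert, Finset.mem_singleton]
      constructor
      · rintro ⟨h1 | h1, h2⟩
        · exact absurd (Or.inl h1) h2
        · exact h1
      · rintro rfl
        refine ⟨Or.inr rfl, ?_⟩
        rintro (rfl | rfl)
        · exact hik rfl
        · exact hjk rfl
    have gval : ∀ (i j k : Fin (n+2)) (h1 : i ≠ j) (h2 : i ≠ k) (h3 : j ≠ k),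
        g (mkE i j k h1 h2 h3) = cc k - cc j := by
      intro i j k h1 h2 h3
      show (∑ x ∈ ({i, k} : Finset (Fin (n+2))) \ {i, j}, cc x)
          - (∑ x ∈ ({i, j} : Finset (Fin (n+2))) \ {i, k}, cc x) = _
      rw [sdiff_lem i j k h1 h2 h3, sdiff_lem i k j h2 h1 (Ne.symm h3),
        Finset.sum_singleton, Finset.sum_singleton]
    have P : ∀ (e e' : JE n), C.src e' = C.src e →
        g (C.conn e e') = g e' + g e * A.coeff e e' := by
      intro e e' hs
      obtain ⟨i, j, k, hij, hik, hjk, rfl⟩ := exists_mk e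
      obtain ⟨a, b, l, hab, hal, hbl, rfl⟩ := exists_mk e'
      rw [hsrc, hsrc] at hs
      have hpair : ({a, b} : Finset (Fin (n+2))) = {i, j} :=
        congrArg (fun v : JV n => v.1) hs
      rcases pair_eq a b i j hab hpair with ⟨rfl, rfl⟩ | ⟨rfl, rfl⟩
      · by_cases hlk : l = k
        · subst hlk
          have hee : mkE a b l hab hal hbl = mkE a b l hij hik hjk := rfl
          rw [hee, C.conn_self, hrevE, hcself, gval, gval]
          ring
        · rw [hconn₁ a b k l hij hik hjk hal hbl (fun h => hlk h.symm),
            hc1 a b k l hij hik hjk hal hbl (fun h => hlk h.symm),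
            gval, gval, gval]
          ring
      · by_cases hlk : l = k
        · subst hlk
          rw [hconn₃ b a l hij hik hjk, hc3 b a l hij hik hjk, gval, gval, gval]
          ring
        · rw [hconn₂ b a k l hij hik hjk hbl hal (fun h => hlk h.symm),
            hc2 b a k l hij hik hjk hbl hal (fun h => hlk h.symm),
            gval, gval, gval]
          ring
    refine ⟨⟨fun p t => g (C.ord p t), ?_⟩, ?_⟩
    · show A.IsAxialClass (fun p t => g (C.ord p t))
      apply (Φrel _).mpr
      intro e e' hs
      have h1 := C.ord_eidx (C.conn e e')
      rw [C.conn_src e e' hs] at h1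
      rw [h1, ordE e e' hs, C.ord_eidx e]
      exact P e e' hs
    · funext t
      show g (C.ord (C.src (Et t)) (C.eidx (Et t))) = c t
      rw [C.ord_eidx (Et t)]
      rw [hEt]
      dsimp only
      rw [gval]
      rw [hcc]
      dsimp only
      have hlt : ((t.castSucc : Fin (n+2)) : ℕ) < n + 1 := by
        simp only [Fin.coe_castSucc]
        exact t.isLt
      rw [dif_pos hlt, dif_neg (by simp)]
      simp
  exact ⟨LinearEquiv.ofBijective θ ⟨hinj, hsurj⟩⟩
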